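/- Let Z and S0 be closed subspaces of a complex Hilbert space H with S0 ∔ Z = H. For every orthogonal projection Q with range(Q) ∔ Z = H, the operators P_Z − P_{S0}, Q − P_Z and P_{S0} − P_Z are invertible, and the operator σ(Q) := P_Z(P_Z − P_{S0})^{-1} + Q(Q − P_Z)^{-1} P_{S0}(P_{S0} − P_Z)^{-1} is invertible, satisfies σ(Q)(Z) = Z and σ(Q)(S0) = range(Q). Moreover, the map Q ↦ σ(Q) is continuous on {Q orthogonal projection : range(Q) ∔ Z = H} with the operator-norm topology. (In particular, the action of Gl^Z = {G invertible : G(Z) = Z} on G^Z = {S closed : S ∔ Z = H} given by G·S = G(S) is transitive, and the orbit map G ↦ G(S0) admits a continuous global cross section.) -/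

import Mathlib

section ringlemmas
variable {R : Type*} [Ring R]

lemma idem_inv_idem {P S : R} (hP : P * P = P) (hS : S * S = S)
    (hu : IsUnit (P - S)) : P * Ring.inverse (P - S) * P = P := by
  set u := hu.unit with hudef
  have hri : Ring.inverse (P - S) = (↑u⁻¹ : R) := by
    rw [← hu.unit_spec, Ring.inverse_unit]
  have key0 : P * (P - S) + (P - S) * P - ((P - S) * (P - S) + (P - S)) =
      (P * P - P) - (S * S - S) := by noncomm_ring
  rw [hP, hS, sub_self, sub_self, sub_zero] at key0
  have key : P * (u : R) + (u : R) * P = (u : R) * u + u := by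
    rw [hu.unit_spec]; exact sub_eq_zero.mp key0
  have h3 : (↑u⁻¹ : R) * P + P * ↑u⁻¹ = 1 + ↑u⁻¹ := by
    have h4 := congrArg (fun x : R => (↑u⁻¹ : R) * x * ↑u⁻¹) key
    simpa only [mul_add, add_mul, mul_assoc, Units.inv_mul_cancel_left,
      Units.mul_inv_cancel_left, Units.inv_mul, Units.mul_inv, mul_one, one_mul] using h4
  have h5 : (↑u⁻¹ : R) * P = 1 + ↑u⁻¹ - P * ↑u⁻¹ := eq_sub_of_add_eq h3
  rw [hri]
  calc P * ↑u⁻¹ * P = P * ((↑u⁻¹ : R) * P) := by rw [mul_assoc]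
    _ = P * (1 + ↑u⁻¹ - P * ↑u⁻¹) := by rw [h5]
    _ = P + P * ↑u⁻¹ - P * P * ↑u⁻¹ := by noncomm_ring
    _ = P := by rw [hP]; abel

lemma idem_inv_other {P S : R} (hP : P * P = P) (hS : S * S = S)
    (hu : IsUnit (P - S)) : P * Ring.inverse (P - S) * S = 0 := by
  have h1 := idem_inv_idem hP hS hu
  have hS' : S = P - (P - S) := by abel
  calc P * Ring.inverse (P - S) * S = P * Ring.inverse (P - S) * (P - (P - S)) := by rw [← hS']
    _ = P * Ring.inverse (P - S) * P - P * (Ring.inverse (P - S) * (P - S)) := by noncomm_ring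
    _ = 0 := by rw [h1, Ring.inverse_mul_cancel _ hu, mul_one, sub_self]

lemma sigma_ring {P S Q : R} (hP : P * P = P) (hS : S * S = S) (hQ : Q * Q = Q)
    (hu1 : IsUnit (P - S)) (hu2 : IsUnit (Q - P)) :
    IsUnit (P * Ring.inverse (P - S) + Q * Ring.inverse (Q - P) * S * Ring.inverse (S - P)) ∧
    (P * Ring.inverse (P - S) + Q * Ring.inverse (Q - P) * S * Ring.inverse (S - P)) * P = P ∧
    (P * Ring.inverse (P - S) + Q * Ring.inverse (Q - P) * S * Ring.inverse (S - P)) * S =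
      Q * Ring.inverse (Q - P) * S ∧
    (P * Ring.inverse (P - S) + Q * Ring.inverse (Q - P) * S * Ring.inverse (S - P)) *
      (S * Ring.inverse (S - P) * Q) = Q := by
  have hu3 : IsUnit (S - P) := by rw [← neg_sub]; exact hu1.neg
  set a := Ring.inverse (P - S) with hadef
  set b := Ring.inverse (Q - P) with hbdef
  set c := Ring.inverse (S - P) with hcdef
  have ha : (P - S) * a = 1 := Ring.mul_inverse_cancel _ hu1
  have hb : (Q - P) * b = 1 := Ring.mul_inverse_cancel _ hu2
  have hc1 : c * (S - P) = 1 := Ring.inverse_mul_cancel _ hu3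
  have f1 : P * a * P = P := idem_inv_idem hP hS hu1
  have f2 : P * a * S = 0 := idem_inv_other hP hS hu1
  have q1 : Q * b * Q = Q := idem_inv_idem hQ hP hu2
  have q2 : Q * b * P = 0 := idem_inv_other hQ hP hu2
  have g2 : S * c * P = 0 := idem_inv_other hS hP hu3
  set E := P * a with hEdef
  set F := Q * b with hFdef
  have hG : S * c = 1 - E := by
    have hca : c = -a := by
      have h2 : (S - P) * (-a) = 1 := by
        calc (S - P) * (-a) = (P - S) * a := by noncomm_ring
          _ = 1 := ha
      calc c = c * ((S - P) * (-a)) := by rw [h2, mul_one]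
        _ = (c * (S - P)) * (-a) := by rw [mul_assoc]
        _ = -a := by rw [hc1, one_mul]
    rw [hca, hEdef]
    calc S * (-a) = (P - S) * a - P * a := by noncomm_ring
      _ = 1 - P * a := by rw [ha]
  have hFE : F * E = 0 := by
    calc F * E = (Q * b * P) * a := by rw [hEdef, hFdef]; noncomm_ring
      _ = 0 := by rw [q2, zero_mul]
  have hEE : E * E = E := by
    calc E * E = (P * a * P) * a := by rw [hEdef]; noncomm_ring
      _ = E := by rw [f1, hEdef]
  have hFF : F * F = F := by
    calc F * F = (Q * b * Q) * b := by rw [hFdef]; noncomm_ring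
      _ = F := by rw [q1, hFdef]
  have hES : E * S = 0 := by rw [hEdef]; exact f2
  have hEP : E * P = P := by rw [hEdef]; exact f1
  have hFP : F * P = 0 := by rw [hFdef]; exact q2
  have key : P * a + Q * b * S * c = E + F := by
    have h1 : Q * b * S * c = F * (S * c) := by rw [hFdef]; noncomm_ring
    have h2 : F * (1 - E) = F - F * E := by noncomm_ring
    rw [h1, hG, h2, hFE, sub_zero, ← hEdef]
  have hEFkey : E * F = E + F - 1 := by
    have h1F : 1 - F = -(P * b) := by rw [hFdef, ← hb]; noncomm_ring
    have hzero : (1 - E) * (1 - F) = 0 := by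
      rw [← hG, h1F]
      calc (S * c) * -(P * b) = -((S * c * P) * b) := by noncomm_ring
        _ = 0 := by rw [g2, zero_mul, neg_zero]
    have h0 : 1 - E - F + E * F = 0 := by
      rw [show (1 : R) - E - F + E * F = (1 - E) * (1 - F) from by noncomm_ring]; exact hzero
    calc E * F = (1 - E - F + E * F) + E + F - 1 := by abel
      _ = 0 + E + F - 1 := by rw [h0]
      _ = E + F - 1 := by abel
  have c1 : (E + F) * (1 - E * F) = 1 := by
    have e1 : (E + F) * (1 - E * F) = E + F - (E * (E * F) + F * (E * F)) := by noncomm_ring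
    have e2 : E * (E * F) = E * F := by rw [← mul_assoc, hEE]
    have e3 : F * (E * F) = 0 := by rw [← mul_assoc, hFE, zero_mul]
    rw [e1, e2, e3, add_zero, hEFkey]; abel
  have c2 : (1 - E * F) * (E + F) = 1 := by
    have e1 : (1 - E * F) * (E + F) = E + F - (E * (F * E) + E * (F * F)) := by noncomm_ring
    have e2 : E * (F * E) = 0 := by rw [hFE, mul_zero]
    have e3 : E * (F * F) = E * F := by rw [hFF]
    rw [e1, e2, e3, zero_add, hEFkey]; abel
  rw [key]
  refine ⟨⟨⟨E + F, 1 - E * F, c1, c2⟩, rfl⟩, ?_, ?_, ?_⟩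
  · rw [add_mul, hEP, hFP, add_zero]
  · rw [add_mul, hES, zero_add, hFdef]
  · have e1 : (E + F) * (S * c * Q) = ((E + F) * (S * c)) * Q := by noncomm_ring
    have e2 : (E + F) * (S * c) = F := by
      rw [hG]
      have : (E + F) * (1 - E) = E + F - (E * E + F * E) := by noncomm_ring
      rw [this, hEE, hFE, add_zero]; abel
    rw [e1, e2, hFdef]; exact q1

end ringlemmas


/-- `P` is an orthogonal projection: idempotent and self-adjoint. -/
def IsOrthProjection {H : Type*} [NormedAddCommGroup H] [InnerProductSpace ℂ H]
    [CompleteSpace H] (P : H →L[ℂ] H) : Prop :=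
  P ∘L P = P ∧ IsSelfAdjoint P

/-- The orthogonal projection onto a closed subspace `S`, as an operator on `H`. -/
noncomputable def orthProj {H : Type*} [NormedAddCommGroup H] [InnerProductSpace ℂ H]
    [CompleteSpace H] (S : Submodule ℂ H) (hS : IsClosed (S : Set H)) : H →L[ℂ] H :=
  haveI : CompleteSpace S := hS.completeSpace_coe
  S.subtypeL ∘L S.orthogonalProjectionOnto

section hilbert
variable {H : Type*} [NormedAddCommGroup H] [InnerProductSpace ℂ H] [CompleteSpace H]

lemma orthProj_mem (S : Submodule ℂ H) (hS : IsClosed (S : Set H)) (x : H) :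
    orthProj S hS x ∈ S := by
  haveI : CompleteSpace S := hS.completeSpace_coe
  exact SetLike.coe_mem _

lemma orthProj_eq_self (S : Submodule ℂ H) (hS : IsClosed (S : Set H)) {x : H} (hx : x ∈ S) :
    orthProj S hS x = x := by
  haveI : CompleteSpace S := hS.completeSpace_coe
  show S.starProjection x = x
  rw [Submodule.starProjection_eq_self_iff]
  exact hx

lemma orthProj_selfAdjoint (S : Submodule ℂ H) (hS : IsClosed (S : Set H)) :
    IsSelfAdjoint (orthProj S hS) := by
  haveI : CompleteSpace S := hS.completeSpace_coe
  exact isSelfAdjoint_starProjection S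

lemma orthProj_idem (S : Submodule ℂ H) (hS : IsClosed (S : Set H)) :
    orthProj S hS * orthProj S hS = orthProj S hS := by
  ext x
  exact orthProj_eq_self S hS (orthProj_mem S hS x)

/-- The continuous oblique projection onto `U` along `V`. -/
lemma exists_oblique (U V : Submodule ℂ H) (hU : IsClosed (U : Set H))
    (hV : IsClosed (V : Set H)) (hc : IsCompl U V) :
    ∃ π : H →L[ℂ] H, (∀ x, π x ∈ U) ∧ (∀ x ∈ U, π x = x) ∧ (∀ x ∈ V, π x = 0) ∧
      (∀ x, x - π x ∈ V) := by
  refine ⟨U.subtypeL ∘L U.linearProjOfClosedCompl V hc hU hV, fun x => SetLike.coe_mem _,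
    ?_, ?_, ?_⟩
  · intro x hx
    show (↑(U.linearProjOfClosedCompl V hc hU hV x) : H) = x
    have h1 : U.linearProjOfClosedCompl V hc hU hV x = U.projectionOnto V hc x :=
      congrFun (Submodule.coe_continuous_linearProjOfClosedCompl' hc hU hV) x
    rw [h1]; exact congrArg Subtype.val (Submodule.projectionOnto_apply_left hc ⟨x, hx⟩)
  · intro x hx
    show (↑(U.linearProjOfClosedCompl V hc hU hV x) : H) = 0
    have h1 : U.linearProjOfClosedCompl V hc hU hV x = U.projectionOnto V hc x :=
      congrFun (Submodule.coe_continuous_linearProjOfClosedCompl' hc hU hV) x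
    rw [h1, Submodule.projectionOnto_apply_of_mem_right hc hx, Submodule.coe_zero]
  · intro x
    have h1 : U.linearProjOfClosedCompl V hc hU hV x = U.projectionOnto V hc x :=
      congrFun (Submodule.coe_continuous_linearProjOfClosedCompl' hc hU hV) x
    have h2 := Submodule.projection_add_projection_eq_self hc x
    have h3 : x - (U.subtypeL ∘L U.linearProjOfClosedCompl V hc hU hV) x =
        ↑(V.projectionOnto U hc.symm x) := by
      show x - (↑(U.linearProjOfClosedCompl V hc hU hV x) : H) = _
      rw [h1]; exact sub_eq_of_eq_add' h2.symm
    rw [h3]; exact SetLike.coe_mem _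

/-- If `P, R` are self-adjoint operators acting as identity on complementary closed
subspaces `U, V` (with `P` ranging in `U`, `R` in `V`), then `P - R` is invertible. -/
lemma isUnit_sub_of_isCompl {P R : H →L[ℂ] H} (hP : IsSelfAdjoint P) (hR : IsSelfAdjoint R)
    {U V : Submodule ℂ H} (hU : IsClosed (U : Set H)) (hV : IsClosed (V : Set H))
    (hc : IsCompl U V) (hPmem : ∀ x, P x ∈ U) (hPfix : ∀ x ∈ U, P x = x)
    (hRmem : ∀ x, R x ∈ V) (hRfix : ∀ x ∈ V, R x = x) : IsUnit (P - R) := by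
  obtain ⟨π, hmem, hfix, hkill, hcompl⟩ := exists_oblique U V hU hV hc
  have h1 : P * π = π := by ext x; exact hPfix _ (hmem x)
  have h2 : π * P = P := by ext x; exact hfix _ (hPmem x)
  have h3 : π * R = 0 := by ext x; exact hkill _ (hRmem x)
  have h4 : R * π = R - 1 + π := by
    ext x
    have h5 : R (x - π x) = x - π x := hRfix _ (hcompl x)
    rw [map_sub] at h5
    have h6 : R (π x) = R x - (x - π x) := by rw [← h5]; abel
    show R (π x) = (R - 1 + π) x
    simp only [ContinuousLinearMap.add_apply, ContinuousLinearMap.sub_apply,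
      ContinuousLinearMap.one_apply]
    rw [h6]; abel
  have hP2 : P * star π = P := by
    have := congrArg star h2
    rwa [star_mul, hP.star_eq] at this
  have hR2 : R * star π = 0 := by
    have := congrArg star h3
    rwa [star_mul, hR.star_eq, star_zero] at this
  have hMD : (P - R) * (π + star π - 1) = 1 := by
    have expand : (P - R) * (π + star π - 1) =
        P * π + P * star π - P - (R * π + R * star π - R) := by noncomm_ring
    rw [expand, h1, hP2, h4, hR2]; abel
  have hDM : (π + star π - 1) * (P - R) = 1 := by
    have := congrArg star hMD
    rw [star_mul, star_sub, star_add, star_star, star_one, star_sub, hP.star_eq,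
      hR.star_eq] at this
    rwa [add_comm (star π) π] at this
  exact ⟨⟨P - R, π + star π - 1, hMD, hDM⟩, rfl⟩

lemma isUnit_PZ_sub_PS (Z S₀ : Submodule ℂ H) (hZ : IsClosed (Z : Set H))
    (hS₀ : IsClosed (S₀ : Set H)) (h : IsCompl S₀ Z) :
    IsUnit (orthProj Z hZ - orthProj S₀ hS₀) :=
  isUnit_sub_of_isCompl (orthProj_selfAdjoint Z hZ) (orthProj_selfAdjoint S₀ hS₀) hZ hS₀
    h.symm (orthProj_mem Z hZ) (fun _ hx => orthProj_eq_self Z hZ hx)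
    (orthProj_mem S₀ hS₀) (fun _ hx => orthProj_eq_self S₀ hS₀ hx)

lemma isUnit_Q_sub_PZ (Z : Submodule ℂ H) (hZ : IsClosed (Z : Set H))
    {Q : H →L[ℂ] H} (hQ : IsOrthProjection Q) (hQc : IsCompl (LinearMap.range (Q : H →ₗ[ℂ] H)) Z) :
    IsUnit (Q - orthProj Z hZ) := by
  have hfixQ : ∀ x ∈ LinearMap.range (Q : H →ₗ[ℂ] H), Q x = x := by
    rintro _ ⟨y, rfl⟩; exact DFunLike.congr_fun hQ.1 y
  have hcl : IsClosed ((LinearMap.range (Q : H →ₗ[ℂ] H) : Submodule ℂ H) : Set H) := by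
    have hset : ((LinearMap.range (Q : H →ₗ[ℂ] H) : Submodule ℂ H) : Set H) = {x | Q x = x} := by
      ext x; exact ⟨fun hx => hfixQ x hx, fun hx => ⟨x, hx⟩⟩
    rw [hset]; exact isClosed_eq Q.continuous continuous_id
  exact isUnit_sub_of_isCompl hQ.2 (orthProj_selfAdjoint Z hZ) hcl hZ hQc
    (fun x => ⟨x, rfl⟩) hfixQ (orthProj_mem Z hZ) (fun _ hx => orthProj_eq_self Z hZ hx)

end hilbert

/-- The cross section `σ(Q) = P_Z (P_Z - P_{S₀})⁻¹ + Q (Q - P_Z)⁻¹ P_{S₀} (P_{S₀} - P_Z)⁻¹`. -/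
noncomputable def sigmaOp {H : Type*} [NormedAddCommGroup H] [InnerProductSpace ℂ H]
    [CompleteSpace H] (Z S₀ : Submodule ℂ H)
    (hZ : IsClosed (Z : Set H)) (hS₀ : IsClosed (S₀ : Set H)) (Q : H →L[ℂ] H) :
    H →L[ℂ] H :=
  orthProj Z hZ * Ring.inverse (orthProj Z hZ - orthProj S₀ hS₀) +
    Q * Ring.inverse (Q - orthProj Z hZ) *
      orthProj S₀ hS₀ * Ring.inverse (orthProj S₀ hS₀ - orthProj Z hZ)

theorem sigma_cross_section {H : Type*} [NormedAddCommGroup H]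
    [InnerProductSpace ℂ H] [CompleteSpace H]
    (Z S₀ : Submodule ℂ H) (hZ : IsClosed (Z : Set H)) (hS₀ : IsClosed (S₀ : Set H))
    (h : IsCompl S₀ Z) :
    (∀ Q : H →L[ℂ] H, IsOrthProjection Q → IsCompl (LinearMap.range (Q : H →ₗ[ℂ] H)) Z →
      IsUnit (orthProj Z hZ - orthProj S₀ hS₀) ∧
      IsUnit (Q - orthProj Z hZ) ∧
      IsUnit (orthProj S₀ hS₀ - orthProj Z hZ) ∧
      IsUnit (sigmaOp Z S₀ hZ hS₀ Q) ∧
      Submodule.map (sigmaOp Z S₀ hZ hS₀ Q : H →ₗ[ℂ] H) Z = Z ∧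
      Submodule.map (sigmaOp Z S₀ hZ hS₀ Q : H →ₗ[ℂ] H) S₀ = LinearMap.range (Q : H →ₗ[ℂ] H)) ∧
    Continuous (fun Q : {Q : H →L[ℂ] H //
        IsOrthProjection Q ∧ IsCompl (LinearMap.range (Q : H →ₗ[ℂ] H)) Z} =>
      sigmaOp Z S₀ hZ hS₀ (Q : H →L[ℂ] H)) := by
  set P := orthProj Z hZ with hPdef
  set S := orthProj S₀ hS₀ with hSdef
  have unit1 : IsUnit (P - S) := isUnit_PZ_sub_PS Z S₀ hZ hS₀ h
  have hPidem : P * P = P := orthProj_idem Z hZ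
  have hSidem : S * S = S := orthProj_idem S₀ hS₀
  constructor
  · intro Q hQ hQc
    have unit2 : IsUnit (Q - P) := isUnit_Q_sub_PZ Z hZ hQ hQc
    have unit3 : IsUnit (S - P) := by rw [← neg_sub]; exact unit1.neg
    have hQidem : Q * Q = Q := hQ.1
    obtain ⟨cunit, cP, cS, cQ⟩ := sigma_ring hPidem hSidem hQidem unit1 unit2
    have hσ : sigmaOp Z S₀ hZ hS₀ Q =
        P * Ring.inverse (P - S) + Q * Ring.inverse (Q - P) * S * Ring.inverse (S - P) := rfl
    refine ⟨unit1, unit2, unit3, by rw [hσ]; exact cunit, ?_, ?_⟩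
    · -- map σ Z = Z
      have hfixZ : ∀ x ∈ Z, sigmaOp Z S₀ hZ hS₀ Q x = x := by
        intro x hx
        have hPx : P x = x := orthProj_eq_self Z hZ hx
        have h5 := congrArg (fun T : H →L[ℂ] H => T x) cP
        simp only [ContinuousLinearMap.mul_apply] at h5
        rw [hPx] at h5
        rw [hσ]
        exact h5
      ext y
      simp only [Submodule.mem_map]
      constructor
      · rintro ⟨x, hx, rfl⟩; rw [ContinuousLinearMap.coe_coe, hfixZ x hx]; exact hx
      · intro hy; exact ⟨y, hy, hfixZ y hy⟩
    · -- map σ S₀ = range Q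
      ext y
      simp only [Submodule.mem_map, LinearMap.mem_range]
      constructor
      · rintro ⟨x, hx, rfl⟩
        have hSx : S x = x := orthProj_eq_self S₀ hS₀ hx
        have h5 := congrArg (fun T : H →L[ℂ] H => T x) cS
        simp only [ContinuousLinearMap.mul_apply] at h5
        rw [hSx] at h5
        rw [hσ]
        exact ⟨Ring.inverse (Q - P) x, h5.symm⟩
      · rintro ⟨w, rfl⟩
        refine ⟨S (Ring.inverse (S - P) (Q w)), orthProj_mem S₀ hS₀ _, ?_⟩
        have h5 := congrArg (fun T : H →L[ℂ] H => T w) cQ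
        simp only [ContinuousLinearMap.mul_apply] at h5
        rw [hσ]
        exact h5
  · -- continuity
    have hinv : Continuous fun Q : {Q : H →L[ℂ] H //
        IsOrthProjection Q ∧ IsCompl (LinearMap.range (Q : H →ₗ[ℂ] H)) Z} =>
        Ring.inverse ((Q : H →L[ℂ] H) - P) := by
      rw [continuous_iff_continuousAt]
      intro Q0
      have hu : IsUnit ((Q0 : H →L[ℂ] H) - P) := isUnit_Q_sub_PZ Z hZ Q0.2.1 Q0.2.2
      have h5 : ContinuousAt Ring.inverse ((Q0 : H →L[ℂ] H) - P) := by
        have := NormedRing.inverse_continuousAt hu.unit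
        rwa [hu.unit_spec] at this
      show ContinuousAt (Ring.inverse ∘ fun Q : {Q : H →L[ℂ] H //
          IsOrthProjection Q ∧ IsCompl (LinearMap.range (Q : H →ₗ[ℂ] H)) Z} => (Q : H →L[ℂ] H) - P) Q0
      exact ContinuousAt.comp h5 ((continuous_subtype_val.sub continuous_const).continuousAt)
    have : (fun Q : {Q : H →L[ℂ] H //
        IsOrthProjection Q ∧ IsCompl (LinearMap.range (Q : H →ₗ[ℂ] H)) Z} =>
        sigmaOp Z S₀ hZ hS₀ (Q : H →L[ℂ] H)) =
        fun Q : {Q : H →L[ℂ] H //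
            IsOrthProjection Q ∧ IsCompl (LinearMap.range (Q : H →ₗ[ℂ] H)) Z} => P * Ring.inverse (P - S) +
          (Q : H →L[ℂ] H) * Ring.inverse ((Q : H →L[ℂ] H) - P) * S *
            Ring.inverse (S - P) := rfl
    rw [this]
    exact continuous_const.add
      (((continuous_subtype_val.mul hinv).mul continuous_const).mul continuous_const)
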